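/- If D is an odd-dominating set of a finite graph G, then G admits an odd-sum coloring using at most χ(G[D]) + χ(G[V∖D]) colors: color G[D] properly with the odd numbers 1, 3, …, 2χ(G[D])−1 and color G[V∖D] properly with the even numbers 2, 4, …, 2χ(G[V∖D]); the resulting coloring is proper and every closed neighborhood has odd color sum. -/

import Mathlib

open SimpleGraph Finset
open scoped Classical

/-- The closed neighborhood `N[v]` of a vertex `v`. -/
def closedNbhd {V : Type*} (G : SimpleGraph V) (v : V) : Set V :=
  insert v (G.neighborSet v)

/-- `D` is an odd-dominating set: `|N[v] ∩ D|` is odd for every vertex `v`. -/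
def OddDomSet {V : Type*} (G : SimpleGraph V) (D : Set V) : Prop :=
  ∀ v, Odd ((closedNbhd G v ∩ D).ncard)

/-- `f` is an odd-sum coloring: a proper coloring with positive integer colors
such that the sum of colors over each closed neighborhood is odd. -/
def IsOddSumColoring {V : Type*} [Fintype V] (G : SimpleGraph V) (f : V → ℕ) : Prop :=
  (∀ v, 0 < f v) ∧ (∀ ⦃a b⦄, G.Adj a b → f a ≠ f b) ∧
  (∀ v, Odd (∑ w ∈ (closedNbhd G v).toFinset, f w))

/-- The odd-sum chromatic number: minimum number of colors used in an odd-sum coloring. -/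
noncomputable def chiOS {V : Type*} [Fintype V] (G : SimpleGraph V) : ℕ :=
  sInf {n | ∃ f : V → ℕ, IsOddSumColoring G f ∧ (Finset.univ.image f).card = n}

theorem oddSum_coloring_from_oddDominating {V : Type*} [Fintype V]
    (G : SimpleGraph V) (D : Set V) (hD : OddDomSet G D) :
    ∃ f : V → ℕ, IsOddSumColoring G f ∧
      ((Finset.univ.image f).card : ℕ∞) ≤
        (G.induce D).chromaticNumber + (G.induce Dᶜ).chromaticNumber := by
  set n1 := (G.induce D).chromaticNumber.toNat with hn1
  set n2 := (G.induce Dᶜ).chromaticNumber.toNat with hn2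
  obtain ⟨C1⟩ := (G.induce D).colorable_chromaticNumber_of_fintype
  obtain ⟨C2⟩ := (G.induce Dᶜ).colorable_chromaticNumber_of_fintype
  set f : V → ℕ := fun v =>
    if h : v ∈ D then 2 * (C1 ⟨v, h⟩ : ℕ) + 1 else 2 * (C2 ⟨v, h⟩ : ℕ) + 2 with hf
  have h2 : (2 : ZMod 2) = 0 := rfl
  have hpar : ∀ w, (f w : ZMod 2) = if w ∈ D then 1 else 0 := by
    intro w
    by_cases h : w ∈ D
    · have hfw : f w = 2 * (C1 ⟨w, h⟩ : ℕ) + 1 := by simp [hf, h]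
      rw [hfw, if_pos h]; push_cast; rw [h2]; ring
    · have hfw : f w = 2 * (C2 ⟨w, h⟩ : ℕ) + 2 := by simp [hf, h]
      rw [hfw, if_neg h]; push_cast; rw [h2]; ring
  refine ⟨f, ⟨?_, ?_, ?_⟩, ?_⟩
  · intro v; by_cases h : v ∈ D <;> simp [hf, h]
  · intro a b hab hfab
    by_cases ha : a ∈ D <;> by_cases hb : b ∈ D
    · simp only [hf, ha, hb, dif_pos] at hfab
      have : C1 ⟨a, ha⟩ ≠ C1 ⟨b, hb⟩ := C1.valid (by simpa using hab)
      exact this (Fin.ext (by omega))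
    · have := hpar a; rw [hfab, hpar b] at this; simp [ha, hb] at this
    · have := hpar a; rw [hfab, hpar b] at this; simp [ha, hb] at this
    · simp only [hf, ha, hb, dif_neg, not_false_iff] at hfab
      have : C2 ⟨a, ha⟩ ≠ C2 ⟨b, hb⟩ := C2.valid (by simpa using hab)
      exact this (Fin.ext (by omega))
  · intro v
    rw [← ZMod.natCast_eq_one_iff_odd]
    push_cast
    calc (∑ w ∈ (closedNbhd G v).toFinset, (f w : ZMod 2))
        = ∑ w ∈ (closedNbhd G v).toFinset, if w ∈ D then (1 : ZMod 2) else 0 := by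
          exact Finset.sum_congr rfl fun w _ => hpar w
      _ = (((closedNbhd G v).toFinset.filter (· ∈ D)).card : ZMod 2) := by
          simp [Finset.sum_boole]
      _ = 1 := by
          rw [ZMod.natCast_eq_one_iff_odd]
          have : ((closedNbhd G v).toFinset.filter (· ∈ D)).card
              = (closedNbhd G v ∩ D).ncard := by
            rw [Set.ncard_eq_toFinset_card']
            congr 1
            ext w
            simp [Set.mem_toFinset]
          rw [this]; exact hD v
  · have hsub : Finset.univ.image f ⊆
        ((Finset.range n1).image (fun c => 2 * c + 1)) ∪
        ((Finset.range n2).image (fun c => 2 * c + 2)) := by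
      intro x hx
      simp only [Finset.mem_image, Finset.mem_univ, true_and] at hx
      obtain ⟨v, rfl⟩ := hx
      by_cases h : v ∈ D
      · exact Finset.mem_union_left _ (by
          simp only [Finset.mem_image, Finset.mem_range]
          exact ⟨(C1 ⟨v, h⟩ : ℕ), (C1 ⟨v, h⟩).2, by simp [hf, h]⟩)
      · exact Finset.mem_union_right _ (by
          simp only [Finset.mem_image, Finset.mem_range]
          exact ⟨(C2 ⟨v, h⟩ : ℕ), (C2 ⟨v, h⟩).2, by simp [hf, h]⟩)
    have hcard : (Finset.univ.image f).card ≤ n1 + n2 := by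
      calc (Finset.univ.image f).card
          ≤ (((Finset.range n1).image (fun c => 2 * c + 1)) ∪
             ((Finset.range n2).image (fun c => 2 * c + 2))).card :=
            Finset.card_le_card hsub
        _ ≤ ((Finset.range n1).image (fun c => 2 * c + 1)).card +
            ((Finset.range n2).image (fun c => 2 * c + 2)).card :=
            Finset.card_union_le _ _
        _ ≤ n1 + n2 := by
            gcongr <;> exact (Finset.card_image_le).trans (by simp)
    have h1 : ((n1 : ℕ∞)) = (G.induce D).chromaticNumber := by
      rw [hn1, ENat.coe_toNat]
      rw [SimpleGraph.chromaticNumber_ne_top_iff_exists]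
      exact ⟨_, (G.induce D).colorable_of_fintype⟩
    have h2 : ((n2 : ℕ∞)) = (G.induce Dᶜ).chromaticNumber := by
      rw [hn2, ENat.coe_toNat]
      rw [SimpleGraph.chromaticNumber_ne_top_iff_exists]
      exact ⟨_, (G.induce Dᶜ).colorable_of_fintype⟩
    calc ((Finset.univ.image f).card : ℕ∞) ≤ ((n1 + n2 : ℕ) : ℕ∞) := by
          exact_mod_cast hcard
      _ = (n1 : ℕ∞) + (n2 : ℕ∞) := by push_cast; rfl
      _ = _ := by rw [h1, h2]
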